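/- Along any extremal, contacts with the switching surface are of order at most 2: there is no time τ ∈ [0,t_f] at which Φ(τ) = Φ̇(τ) = Φ̈(τ) = 0, where Φ̇ = H₀₁∘(x,p) and Φ̈ = H₀₀₁∘(x,p); indeed such a τ would force p(τ) = 0, contradicting the nontriviality of the adjoint vector. -/

import Mathlib

open MeasureTheory

noncomputable section

/-- Lie bracket of vector fields on ℝ³: `[F,G](x) = G'(x)F(x) − F'(x)G(x)`. -/
def lieBracket (F G : (Fin 3 → ℝ) → (Fin 3 → ℝ)) (x : Fin 3 → ℝ) : Fin 3 → ℝ :=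
  fderiv ℝ G x (F x) - fderiv ℝ F x (G x)

/-- Drift vector field of the electric vehicle. -/
def F0 (c1 c2 c3 c4 c5 c6 : ℝ) (x : Fin 3 → ℝ) : Fin 3 → ℝ :=
  ![c1 * x 0 + c2 * x 2, c3 * x 2, c4 + c5 * x 0 + c6 * (x 2) ^ 2]

/-- Control vector field of the electric vehicle. -/
def F1 (c7 : ℝ) (_x : Fin 3 → ℝ) : Fin 3 → ℝ := ![c7, 0, 0]

/-- An extremal of the minimum time problem on `[0, t_f]`: a measurable control
`u` with values in `[-1,1]`, together with an absolutely continuous pair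
`(x, p)` (encoded by the integral form of the Hamiltonian ODE) with nonvanishing
adjoint vector, satisfying the maximization condition
`u(t) Φ(t) = |Φ(t)|` a.e., where `Φ(t) = c₇ p₁(t)` is the switching function. -/
structure IsExtremal (c1 c2 c3 c4 c5 c6 c7 tf : ℝ)
    (x p : ℝ → Fin 3 → ℝ) (u : ℝ → ℝ) : Prop where
  measurable_u : Measurable u
  u_mem : ∀ᵐ t ∂(volume.restrict (Set.Icc (0:ℝ) tf)), u t ∈ Set.Icc (-1:ℝ) 1
  p_ne : ∀ t ∈ Set.Icc (0:ℝ) tf, p t ≠ 0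
  cont_x : ContinuousOn x (Set.Icc (0:ℝ) tf)
  cont_p : ContinuousOn p (Set.Icc (0:ℝ) tf)
  ode_x1 : ∀ t ∈ Set.Icc (0:ℝ) tf,
    x t 0 = x 0 0 + ∫ s in (0:ℝ)..t, (c1 * x s 0 + c2 * x s 2 + u s * c7)
  ode_x2 : ∀ t ∈ Set.Icc (0:ℝ) tf,
    x t 1 = x 0 1 + ∫ s in (0:ℝ)..t, (c3 * x s 2)
  ode_x3 : ∀ t ∈ Set.Icc (0:ℝ) tf,
    x t 2 = x 0 2 + ∫ s in (0:ℝ)..t, (c4 + c5 * x s 0 + c6 * (x s 2) ^ 2)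
  ode_p1 : ∀ t ∈ Set.Icc (0:ℝ) tf,
    p t 0 = p 0 0 + ∫ s in (0:ℝ)..t, (-(c1 * p s 0 + c5 * p s 2))
  ode_p2 : ∀ t ∈ Set.Icc (0:ℝ) tf, p t 1 = p 0 1
  ode_p3 : ∀ t ∈ Set.Icc (0:ℝ) tf,
    p t 2 = p 0 2 + ∫ s in (0:ℝ)..t, (-(c2 * p s 0 + c3 * p s 1 + 2 * c6 * x s 2 * p s 2))
  maximization : ∀ᵐ t ∂(volume.restrict (Set.Icc (0:ℝ) tf)),
    u t * (c7 * p t 0) = |c7 * p t 0|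

def pr (i : Fin 3) : (Fin 3 → ℝ) →L[ℝ] ℝ := ContinuousLinearMap.proj i

lemma hasFDerivAt_F0 (c1 c2 c3 c4 c5 c6 : ℝ) (x : Fin 3 → ℝ) :
    HasFDerivAt (F0 c1 c2 c3 c4 c5 c6)
      (ContinuousLinearMap.pi
        ![c1 • pr 0 + c2 • pr 2,
          c3 • pr 2,
          c5 • pr 0 + (2 * c6 * x 2) • pr 2]) x := by
  have hF : F0 c1 c2 c3 c4 c5 c6 = fun y i =>
      (![fun y : Fin 3 → ℝ => c1 * y 0 + c2 * y 2,
         fun y : Fin 3 → ℝ => c3 * y 2,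
         fun y : Fin 3 → ℝ => c4 + c5 * y 0 + c6 * (y 2) ^ 2] : Fin 3 → (Fin 3 → ℝ) → ℝ) i y := by
    funext y i
    fin_cases i <;> simp [F0]
  rw [hF, hasFDerivAt_pi]
  intro i
  have h0 : HasFDerivAt (fun y : Fin 3 → ℝ => y 0) (pr 0) x :=
    hasFDerivAt_apply 0 x
  have h2 : HasFDerivAt (fun y : Fin 3 → ℝ => y 2) (pr 2) x :=
    hasFDerivAt_apply 2 x
  fin_cases i
  · have h : HasFDerivAt (fun y : Fin 3 → ℝ => c1 * y 0 + c2 * y 2) (c1 • pr 0 + c2 • pr 2) x :=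
      (h0.const_mul c1).add (h2.const_mul c2)
    simpa using h
  · simpa using h2.const_mul c3
  · have hsq : HasFDerivAt (fun y : Fin 3 → ℝ => (y 2) ^ 2) ((2 * x 2) • pr 2) x := by
      have h : HasFDerivAt (fun y : Fin 3 → ℝ => y 2 * y 2) (x 2 • pr 2 + x 2 • pr 2) x := h2.mul h2
      have e : (fun y : Fin 3 → ℝ => (y 2) ^ 2) = fun y => y 2 * y 2 := by
        funext y; ring
      rw [e]
      convert h using 1
      rw [two_mul, add_smul]
    have key : HasFDerivAt (fun y : Fin 3 → ℝ => c4 + c5 * y 0 + c6 * y 2 ^ 2)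
        (c5 • pr 0 + (2 * c6 * x 2) • pr 2) x := by
      have h : HasFDerivAt (fun y : Fin 3 → ℝ => c4 + c5 * y 0 + c6 * y 2 ^ 2)
          (c5 • pr 0 + c6 • (2 * x 2) • pr 2) x :=
        ((h0.const_mul c5).const_add c4).add (hsq.const_mul c6)
      convert h using 1
      rw [smul_smul]
      congr 1
      ring
    simpa using key



lemma bracket1 (c1 c2 c3 c4 c5 c6 c7 : ℝ) :
    lieBracket (F0 c1 c2 c3 c4 c5 c6) (F1 c7) =
      fun _ => ![-(c1 * c7), 0, -(c5 * c7)] := by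
  funext y i
  have hc : F1 c7 = fun _ : Fin 3 → ℝ => ![c7, 0, 0] := rfl
  have hd1 : fderiv ℝ (F1 c7) y = 0 := by rw [hc]; exact fderiv_const_apply _
  have hd0 := (hasFDerivAt_F0 c1 c2 c3 c4 c5 c6 y).fderiv
  simp only [lieBracket, hd1, hd0, ContinuousLinearMap.zero_apply, Pi.sub_apply,
    ContinuousLinearMap.pi_apply]
  fin_cases i <;>
    simp [F1, pr, ContinuousLinearMap.proj_apply, ContinuousLinearMap.smul_apply]

lemma bracket2 (c1 c2 c3 c4 c5 c6 c7 : ℝ) (y : Fin 3 → ℝ) :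
    lieBracket (F0 c1 c2 c3 c4 c5 c6) (lieBracket (F0 c1 c2 c3 c4 c5 c6) (F1 c7)) y =
      ![c1 * c1 * c7 + c2 * c5 * c7, c3 * c5 * c7,
        c5 * c1 * c7 + 2 * c6 * y 2 * c5 * c7] := by
  funext i
  rw [bracket1]
  have hd1 : fderiv ℝ (fun _ : Fin 3 → ℝ => ![-(c1 * c7), 0, -(c5 * c7)]) y = 0 :=
    fderiv_const_apply _
  have hd0 := (hasFDerivAt_F0 c1 c2 c3 c4 c5 c6 y).fderiv
  simp only [lieBracket, hd1, hd0, ContinuousLinearMap.zero_apply, Pi.sub_apply,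
    ContinuousLinearMap.pi_apply]
  fin_cases i <;>
    (simp [pr, ContinuousLinearMap.proj_apply, ContinuousLinearMap.smul_apply]; ring)

/-- Along any extremal, contacts with the switching surface are of order at
most 2: there is no time `τ` at which `Φ(τ) = Φ̇(τ) = Φ̈(τ) = 0`, where
`Φ̇ = H₀₁ = ⟨p, F₀₁(x)⟩` and `Φ̈ = H₀₀₁ = ⟨p, F₀₀₁(x)⟩`. -/
theorem stmt10 (c1 c2 c3 c4 c5 c6 c7 tf : ℝ)
    (h1 : c1 < 0) (h2 : c2 < 0) (h3 : 0 < c3) (h4 : c4 < 0)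
    (h5 : 0 < c5) (h6 : c6 < 0) (h7 : 0 < c7)
    (x p : ℝ → Fin 3 → ℝ) (u : ℝ → ℝ)
    (hext : IsExtremal c1 c2 c3 c4 c5 c6 c7 tf x p u) :
    ∀ τ ∈ Set.Icc (0:ℝ) tf,
      ¬ (c7 * p τ 0 = 0 ∧
         (∑ i, p τ i * lieBracket (F0 c1 c2 c3 c4 c5 c6) (F1 c7) (x τ) i) = 0 ∧
         (∑ i, p τ i *
            lieBracket (F0 c1 c2 c3 c4 c5 c6)
              (lieBracket (F0 c1 c2 c3 c4 c5 c6) (F1 c7)) (x τ) i) = 0) := by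
  intro τ hτ ⟨hΦ, hS1, hS2⟩
  have hc7 : c7 ≠ 0 := ne_of_gt h7
  have hp0 : p τ 0 = 0 := by
    rcases mul_eq_zero.1 hΦ with h | h
    · exact absurd h hc7
    · exact h
  rw [bracket1, Fin.sum_univ_three] at hS1
  simp only [Matrix.cons_val_zero, Matrix.cons_val_one, Matrix.head_cons,
    Matrix.cons_val_two, Matrix.tail_cons, hp0] at hS1
  have hp2 : p τ 2 = 0 := by
    have h50 : c5 * c7 ≠ 0 := mul_ne_zero (ne_of_gt h5) hc7
    have : p τ 2 * -(c5 * c7) = 0 := by linarith [hS1]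
    rcases mul_eq_zero.1 this with h | h
    · exact h
    · exact absurd h (by simpa using h50)
  rw [Fin.sum_univ_three, bracket2] at hS2
  simp only [Matrix.cons_val_zero, Matrix.cons_val_one, Matrix.head_cons,
    Matrix.cons_val_two, Matrix.tail_cons, hp0, hp2] at hS2
  have hp1 : p τ 1 = 0 := by
    have h350 : c3 * c5 * c7 ≠ 0 := mul_ne_zero (mul_ne_zero (ne_of_gt h3) (ne_of_gt h5)) hc7
    have : p τ 1 * (c3 * c5 * c7) = 0 := by linarith [hS2]
    rcases mul_eq_zero.1 this with h | h
    · exact h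
    · exact absurd h h350
  apply hext.p_ne τ hτ
  funext i
  simp only [Pi.zero_apply]
  fin_cases i
  · exact hp0
  · exact hp1
  · exact hp2
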